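/- Let M=(I,V,E) be an iMAG and a∈V. Some edge of M carries an arrowhead at a if and only if a∉Anc_A(S_A) for every isADMG A=(I,V,S_A,E')∈[M]_G. Equivalently: if no edge of M has an arrowhead at a, then there exists an isADMG A∈[M]_G with a∈Anc_A(S_A). -/

import Mathlib

noncomputable section
open Classical

/-- Edge-endpoint marks: tail `−`, arrowhead `>`, or circle `∘`. -/
inductive Mark : Type
  | tail
  | arrow
  | circle
  deriving DecidableEq

/-- A mixed graph with input nodes over a node type `N`, as raw data.
`mark a b` is the mark at `a` on the (unique) edge between `a` and `b`,
or `none` if there is no edge between `a` and `b`. -/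
structure MixedGraph (N : Type) where
  inputs : Set N
  outputs : Set N
  mark : N → N → Option Mark

namespace MixedGraph

variable {N N' : Type}

/-- All nodes of the graph. -/
def nodes (G : MixedGraph N) : Set N := G.inputs ∪ G.outputs

/-- `a` and `b` are adjacent (joined by an edge). -/
def adj (G : MixedGraph N) (a b : N) : Prop := (G.mark a b).isSome

/-- Directed edge `a → b`: tail at `a`, arrowhead at `b`. -/
def dir (G : MixedGraph N) (a b : N) : Prop :=
  G.mark a b = some Mark.tail ∧ G.mark b a = some Mark.arrow

/-- Bidirected edge `a ↔ b`. -/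
def bidir (G : MixedGraph N) (a b : N) : Prop :=
  G.mark a b = some Mark.arrow ∧ G.mark b a = some Mark.arrow

/-- Undirected edge `a − b`. -/
def undir (G : MixedGraph N) (a b : N) : Prop :=
  G.mark a b = some Mark.tail ∧ G.mark b a = some Mark.tail

/-- Edge `a ∘→ b`: circle at `a`, arrowhead at `b`. -/
def circArrow (G : MixedGraph N) (a b : N) : Prop :=
  G.mark a b = some Mark.circle ∧ G.mark b a = some Mark.arrow

/-- Edge `a ∘−∘ b`: circles at both ends. -/
def circCirc (G : MixedGraph N) (a b : N) : Prop :=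
  G.mark a b = some Mark.circle ∧ G.mark b a = some Mark.circle

/-- Edge `a ∘− b`: circle at `a`, tail at `b`. -/
def circTail (G : MixedGraph N) (a b : N) : Prop :=
  G.mark a b = some Mark.circle ∧ G.mark b a = some Mark.tail

/-- Edge `a −∘ b`: tail at `a`, circle at `b`. -/
def tailCirc (G : MixedGraph N) (a b : N) : Prop :=
  G.mark a b = some Mark.tail ∧ G.mark b a = some Mark.circle

/-- Some edge of `G` carries an arrowhead at `a`. -/
def arrowAt (G : MixedGraph N) (a : N) : Prop :=
  ∃ b, G.mark a b = some Mark.arrow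

/-- `a` is an ancestor of `b`: `a = b` or a directed path `a → ⋯ → b` exists. -/
def anc (G : MixedGraph N) : N → N → Prop := Relation.ReflTransGen G.dir

/-- The ancestors of a set `S` of nodes. -/
def ancSet (G : MixedGraph N) (S : Set N) : Set N := {a | ∃ s ∈ S, G.anc a s}

/-- Potentially directed edge from `a` towards `b`: an edge with no arrowhead at its
earlier endpoint `a` and no tail at its later endpoint `b`. -/
def potDir (G : MixedGraph N) (a b : N) : Prop :=
  G.adj a b ∧ G.mark a b ≠ some Mark.arrow ∧ G.mark b a ≠ some Mark.tail

/-- `a` is a possible ancestor of `b`: `a = b` or a potentially directed path runs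
from `a` to `b`. -/
def poAn (G : MixedGraph N) : N → N → Prop := Relation.ReflTransGen G.potDir

/-- The possible ancestors of a set `S` of nodes. -/
def poAnSet (G : MixedGraph N) (S : Set N) : Set N := {a | ∃ s ∈ S, G.poAn a s}

/-- Well-formedness of a mixed graph with input nodes: inputs and outputs are disjoint
finite sets, edges are symmetric and irreflexive and join nodes of the graph. -/
def WF (G : MixedGraph N) : Prop :=
  Disjoint G.inputs G.outputs ∧ G.inputs.Finite ∧ G.outputs.Finite ∧
  (∀ a b, (G.mark a b).isSome → (G.mark b a).isSome) ∧
  (∀ a, G.mark a a = none) ∧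
  (∀ a b, (G.mark a b).isSome → a ∈ G.nodes ∧ b ∈ G.nodes)

/-- The induced subgraph of `G` over the node set `A`. -/
def induce (G : MixedGraph N) (A : Set N) : MixedGraph N where
  inputs := G.inputs ∩ A
  outputs := G.outputs ∩ A
  mark := fun a b => if a ∈ A ∧ b ∈ A then G.mark a b else none

/-- Transport a mixed graph over `N` to one over `N ⊕ N'` along `Sum.inl`. -/
def sumInl (G : MixedGraph N) : MixedGraph (N ⊕ N') where
  inputs := Sum.inl '' G.inputs
  outputs := Sum.inl '' G.outputs
  mark := fun x y =>
    match x, y with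
    | Sum.inl a, Sum.inl b => G.mark a b
    | _, _ => none

/-- `G` is a subgraph of `H`: its nodes and marked edges are among those of `H`. -/
def Subgraph (G H : MixedGraph N) : Prop :=
  G.inputs ⊆ H.inputs ∧ G.outputs ⊆ H.outputs ∧
  ∀ a b m, G.mark a b = some m → H.mark a b = some m

end MixedGraph

/-- A walk in `G` with `len` edges, visiting the nodes `f 0, …, f len`
(consecutive nodes are adjacent). -/
structure GWalk {N : Type} (G : MixedGraph N) where
  len : ℕ
  f : ℕ → N
  hadj : ∀ i < len, G.adj (f i) (f (i + 1))

namespace GWalk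

variable {N : Type} {G : MixedGraph N}

/-- The first node of the walk. -/
def first (w : GWalk G) : N := w.f 0

/-- The last node of the walk. -/
def last (w : GWalk G) : N := w.f w.len

/-- The walk is a path: no repeated nodes. -/
def IsPath (w : GWalk G) : Prop :=
  ∀ i ≤ w.len, ∀ j ≤ w.len, w.f i = w.f j → i = j

/-- The (interior) node at position `i` is a collider on the walk: both incident
edges carry arrowheads at it. -/
def ColliderAt (w : GWalk G) (i : ℕ) : Prop :=
  G.mark (w.f i) (w.f (i - 1)) = some Mark.arrow ∧
  G.mark (w.f i) (w.f (i + 1)) = some Mark.arrow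

end GWalk

namespace MixedGraph

variable {N : Type}

/-- `w` is an `(L,S)`-inducing walk: every non-endnode is in `L` or a collider, and
every collider lies in `Anc({first, last} ∪ S)`. -/
def InducingWalk (G : MixedGraph N) (L S : Set N) (w : GWalk G) : Prop :=
  (∀ i, 0 < i → i < w.len → w.f i ∈ L ∨ w.ColliderAt i) ∧
  (∀ i, 0 < i → i < w.len → w.ColliderAt i →
    w.f i ∈ G.ancSet ({w.first, w.last} ∪ S))

/-- There is an `(L,S)`-inducing walk from `a` to `b` in `G`. -/
def InducingWalkBtw (G : MixedGraph N) (L S : Set N) (a b : N) : Prop :=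
  ∃ w : GWalk G, w.first = a ∧ w.last = b ∧ G.InducingWalk L S w

/-- There is an `(L,S)`-inducing path from `a` to `b` in `G`. -/
def InducingPathBtw (G : MixedGraph N) (L S : Set N) (a b : N) : Prop :=
  ∃ w : GWalk G, w.IsPath ∧ w.first = a ∧ w.last = b ∧ G.InducingWalk L S w

/-- `G` is an iADMG: all edges directed or bidirected, no directed cycles, no
arrowheads at input nodes, and no edges between two input nodes. -/
def IsIADMG (G : MixedGraph N) : Prop :=
  G.WF ∧
  (∀ a b, G.adj a b → G.dir a b ∨ G.dir b a ∨ G.bidir a b) ∧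
  (∀ a b, G.dir a b → ¬ G.anc b a) ∧
  (∀ a ∈ G.inputs, ∀ b, G.mark a b ≠ some Mark.arrow) ∧
  (∀ a ∈ G.inputs, ∀ b ∈ G.inputs, ¬ G.adj a b)

/-- `G` is an iPAG. -/
def IsIPAG (G : MixedGraph N) : Prop :=
  G.WF ∧
  (∀ a ∈ G.inputs, ∀ b, G.mark a b ≠ some Mark.arrow) ∧
  (∀ a ∈ G.inputs, ∀ b ∈ G.inputs, ¬ G.adj a b) ∧
  (∀ a b, G.dir a b → ¬ G.anc b a) ∧
  (∀ a b, G.anc a b → ¬ G.bidir b a) ∧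
  (∀ a b c, G.mark b a = some Mark.arrow → ¬ G.undir b c) ∧
  (∀ a b, a ≠ b → a ∈ G.nodes → b ∈ G.nodes → ¬ G.adj a b →
    ¬ G.InducingPathBtw ∅ ∅ a b)

/-- `G` is an iMAG: an iPAG with no circle marks. -/
def IsIMAG (G : MixedGraph N) : Prop :=
  G.IsIPAG ∧ ∀ a b, G.mark a b ≠ some Mark.circle

/-- The visibility condition for a directed edge `a → b` of `G`: either `a` is an
input node, or some node `c` not adjacent to `b` satisfies `c *→ a`, or there is a
path `c *→ v₁ ↔ ⋯ ↔ v_{n−1} ↔ a` (`n ≥ 2`) with every `vᵢ` a parent of `b`. -/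
def VisibleCond (G : MixedGraph N) (a b : N) : Prop :=
  a ∈ G.inputs ∨
  ∃ c, c ≠ b ∧ ¬ G.adj c b ∧
    (G.mark a c = some Mark.arrow ∨
      ∃ w : GWalk G, w.IsPath ∧ 2 ≤ w.len ∧ w.first = c ∧ w.last = a ∧
        G.mark (w.f 1) (w.f 0) = some Mark.arrow ∧
        (∀ i, 1 ≤ i → i < w.len → G.bidir (w.f i) (w.f (i + 1))) ∧
        (∀ i, 1 ≤ i → i < w.len → G.dir (w.f i) b))

/-- `a → b` is a visible directed edge of `G`. -/
def VisibleDir (G : MixedGraph N) (a b : N) : Prop :=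
  G.dir a b ∧ G.VisibleCond a b

/-- `a` and `b` are in the same bucket of `G`: some path between them carries no
arrowhead mark on any of its edges. -/
def SameBucket (G : MixedGraph N) (a b : N) : Prop :=
  ∃ w : GWalk G, w.IsPath ∧ w.first = a ∧ w.last = b ∧
    ∀ i < w.len, G.mark (w.f i) (w.f (i + 1)) ≠ some Mark.arrow ∧
      G.mark (w.f (i + 1)) (w.f i) ≠ some Mark.arrow

end MixedGraph

/-- An isADMG: an iADMG together with its set `sel` of latent selection nodes.
The observed output nodes are `graph.outputs \ sel`. -/
structure SADMG (N : Type) where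
  graph : MixedGraph N
  sel : Set N

namespace SADMG

/-- Well-formedness of an isADMG. -/
def WF {N : Type} (A : SADMG N) : Prop :=
  A.graph.IsIADMG ∧ A.sel ⊆ A.graph.outputs

/-- The observed output nodes `O`. -/
def obs {N : Type} (A : SADMG N) : Set N := A.graph.outputs \ A.sel

end SADMG

/-- An ilsADMG: an iADMG together with its sets of latent output nodes and of
latent selection nodes.  The observed output nodes are the remaining outputs. -/
structure LSADMG (N : Type) where
  graph : MixedGraph N
  latent : Set N
  sel : Set N

namespace LSADMG

/-- Well-formedness of an ilsADMG. -/
def WF {N : Type} (A : LSADMG N) : Prop :=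
  A.graph.IsIADMG ∧ A.latent ⊆ A.graph.outputs ∧ A.sel ⊆ A.graph.outputs ∧
  Disjoint A.latent A.sel

/-- The observed output nodes `O`. -/
def obs {N : Type} (A : LSADMG N) : Set N := A.graph.outputs \ (A.latent ∪ A.sel)

end LSADMG

/-- An iPAG/iMAG `P` represents the isADMG `A`: nodes match; adjacency in `P`
corresponds exactly to `S`-inducing paths in `A` (with no edges inside the inputs);
arrowheads at `a` imply `a ∉ Anc_A({b} ∪ S)`; tails at `a` imply `a ∈ Anc_A({b} ∪ S)`. -/
def RepresentsS {N : Type} (P : MixedGraph N) (A : SADMG N) : Prop :=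
  P.inputs = A.graph.inputs ∧
  P.outputs = A.obs ∧
  (∀ a b, a ≠ b → a ∈ P.nodes → b ∈ P.nodes →
    (P.adj a b ↔
      (¬(a ∈ P.inputs ∧ b ∈ P.inputs) ∧ A.graph.InducingPathBtw ∅ A.sel a b))) ∧
  (∀ a b, P.mark a b = some Mark.arrow → a ∉ A.graph.ancSet ({b} ∪ A.sel)) ∧
  (∀ a b, P.mark a b = some Mark.tail → a ∈ A.graph.ancSet ({b} ∪ A.sel))

/-- An iPAG/iMAG `P` `(L,S)`-represents the ilsADMG `A`. -/
def RepresentsLS {N : Type} (P : MixedGraph N) (A : LSADMG N) : Prop :=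
  P.inputs = A.graph.inputs ∧
  P.outputs = A.obs ∧
  (∀ a b, a ≠ b → a ∈ P.nodes → b ∈ P.nodes →
    (P.adj a b ↔
      (¬(a ∈ P.inputs ∧ b ∈ P.inputs) ∧ A.graph.InducingPathBtw A.latent A.sel a b))) ∧
  (∀ a b, P.mark a b = some Mark.arrow → a ∉ A.graph.ancSet ({b} ∪ A.sel)) ∧
  (∀ a b, P.mark a b = some Mark.tail → a ∈ A.graph.ancSet ({b} ∪ A.sel))

/-- The explicit candidate for `MAG(A)` of an ilsADMG `A`: input nodes `I`, output
nodes `O`; distinct `a,b ∈ I ∪ O` adjacent iff `{a,b} ⊄ I` and there is an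
`(L,S)`-inducing path between them in `A`; the mark at `a` on each edge is a tail
if `a ∈ Anc_A({b} ∪ S)` and an arrowhead otherwise. -/
def magOfLS {N : Type} (A : LSADMG N) : MixedGraph N where
  inputs := A.graph.inputs
  outputs := A.obs
  mark := fun a b =>
    if a ≠ b ∧ a ∈ A.graph.inputs ∪ A.obs ∧ b ∈ A.graph.inputs ∪ A.obs ∧
        ¬(a ∈ A.graph.inputs ∧ b ∈ A.graph.inputs) ∧
        A.graph.InducingPathBtw A.latent A.sel a b then
      (if a ∈ A.graph.ancSet ({b} ∪ A.sel) then some Mark.tail else some Mark.arrow)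
    else none

/-- A walk is `C`-open (in a graph without circle marks): its endnodes are not in
`C`, no non-collider on it is in `C`, and every collider on it is in `Anc(C)`. -/
def COpen {N : Type} (H : MixedGraph N) (C : Set N) (w : GWalk H) : Prop :=
  w.first ∉ C ∧ w.last ∉ C ∧
  ∀ i, 0 < i → i < w.len →
    (¬ w.ColliderAt i → w.f i ∉ C) ∧ (w.ColliderAt i → w.f i ∈ H.ancSet C)

/-- `A` is id-separated from `B` given `C` in `H` (graphs without circle marks):
every path/walk from a node of `A` to a node of `B ∪ inputs` is not `C`-open. -/
def IdSepSimple {N : Type} (H : MixedGraph N) (A B C : Set N) : Prop :=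
  ∀ w : GWalk H, w.first ∈ A → w.last ∈ B ∪ H.inputs → ¬ COpen H C w

/-- A walk in a manipulated graph `H` (with set `DI` of regime input nodes) is
`C`-id-open. -/
def IdOpen {N : Type} (H : MixedGraph N) (DI C : Set N) (w : GWalk H) : Prop :=
  w.first ∉ C ∧ w.last ∉ C ∧
  ∀ i, 0 < i → i < w.len →
    (w.f i ∉ C ∧ (H.mark (w.f i) (w.f (i - 1)) = some Mark.tail ∨
        H.mark (w.f i) (w.f (i + 1)) = some Mark.tail)) ∨
    (w.f i ∉ C ∧ H.mark (w.f i) (w.f (i - 1)) = some Mark.circle ∧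
        H.mark (w.f i) (w.f (i + 1)) = some Mark.circle ∧
        ¬ H.adj (w.f (i - 1)) (w.f (i + 1))) ∨
    (w.ColliderAt i ∧ w.f (i - 1) ∉ DI ∧ w.f i ∉ DI ∧ w.f (i + 1) ∉ DI ∧
        w.f i ∈ H.ancSet C) ∨
    (w.ColliderAt i ∧ ¬(w.f (i - 1) ∉ DI ∧ w.f i ∉ DI ∧ w.f (i + 1) ∉ DI) ∧
        w.f i ∈ H.poAnSet (C ∩ H.outputs)) ∨
    (w.f (i - 1) ∈ DI ∧ H.mark (w.f i) (w.f (i - 1)) = some Mark.circle ∧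
        H.mark (w.f i) (w.f (i + 1)) = some Mark.arrow ∧
        w.f i ∈ H.poAnSet (C ∩ H.outputs)) ∨
    (w.f (i + 1) ∈ DI ∧ H.mark (w.f i) (w.f (i - 1)) = some Mark.arrow ∧
        H.mark (w.f i) (w.f (i + 1)) = some Mark.circle ∧
        w.f i ∈ H.poAnSet (C ∩ H.outputs))

/-- `A` is id-separated from `B` given `C` in the manipulated graph `H`, whose set
of regime input nodes is `DI`: every path/walk from a node of `A` to a node of
`B ∪ inputs` is not `C`-id-open. -/
def IdSep {N : Type} (H : MixedGraph N) (DI A B C : Set N) : Prop :=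
  ∀ w : GWalk H, w.first ∈ A → w.last ∈ B ∪ H.inputs → ¬ IdOpen H DI C w

/-- Hard manipulation `do(T)` of an isADMG-type graph: reclassify the nodes of `T`
as input nodes and delete every edge with an arrowhead at a node of `T`. -/
def admgHardManip {N : Type} (G : MixedGraph N) (T : Set N) : MixedGraph N where
  inputs := G.inputs ∪ (T ∩ G.outputs)
  outputs := G.outputs \ T
  mark := fun x y =>
    if (x ∈ T ∧ G.mark x y = some Mark.arrow) ∨
        (y ∈ T ∧ G.mark y x = some Mark.arrow) then none
    else G.mark x y

/-- Soft manipulation `do(I_D)` of an isADMG-type graph: add a fresh input node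
`I_d = Sum.inr d` and the directed edge `I_d → d` for each `d ∈ D`. -/
def admgSoftManip {N : Type} (G : MixedGraph N) (D : Set N) : MixedGraph (N ⊕ N) where
  inputs := Sum.inl '' G.inputs ∪ Sum.inr '' D
  outputs := Sum.inl '' G.outputs
  mark := fun x y =>
    match x, y with
    | Sum.inl a, Sum.inl b => G.mark a b
    | Sum.inr d, Sum.inl a => if d ∈ D ∧ a = d then some Mark.tail else none
    | Sum.inl a, Sum.inr d => if d ∈ D ∧ a = d then some Mark.arrow else none
    | Sum.inr _, Sum.inr _ => none

/-- Soft manipulation of an isADMG. -/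
def SADMG.softManip {N : Type} (A : SADMG N) (D : Set N) : SADMG (N ⊕ N) where
  graph := admgSoftManip A.graph D
  sel := Sum.inl '' A.sel

/-- Hard manipulation `do(T)` of an iMAG-type graph: input nodes `I ∪ (T ∩ V)`,
output nodes `V \ T`; delete all edges with an arrowhead at a node of `T \ I` and
all edges between two nodes of `T ∪ I`. -/
def magHardManip {N : Type} (G : MixedGraph N) (T : Set N) : MixedGraph N where
  inputs := G.inputs ∪ (T ∩ G.outputs)
  outputs := G.outputs \ T
  mark := fun x y =>
    if (x ∈ T ∧ x ∉ G.inputs ∧ G.mark x y = some Mark.arrow) ∨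
        (y ∈ T ∧ y ∉ G.inputs ∧ G.mark y x = some Mark.arrow) ∨
        ((x ∈ T ∨ x ∈ G.inputs) ∧ (y ∈ T ∨ y ∈ G.inputs)) then none
    else G.mark x y

/-- The mark at node `y` on the new edge between the regime node `I_a = Sum.inr a`
and `y` in the soft manipulation of an iMAG-type graph `G` over `N ⊕ N`
(`none` if there is no such edge): `I_a → a` if some edge of `G` has an arrowhead
at `a`; `I_a − a` if some undirected edge is at `a`; `I_a −∘ a` otherwise;
`I_a → b` for every output `b` with `a → b` invisible; `I_a − b` for every output
`b` with `a − b` in `G`. -/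
def magSoftTarget {N : Type} (G : MixedGraph (N ⊕ N)) (a : N) (y : N ⊕ N) : Option Mark :=
  if y = Sum.inl a then
    (if G.arrowAt (Sum.inl a) then some Mark.arrow
     else if ∃ c, G.undir (Sum.inl a) c then some Mark.tail
     else some Mark.circle)
  else if y ∈ G.outputs ∧ G.dir (Sum.inl a) y ∧ ¬ G.VisibleCond (Sum.inl a) y then
    some Mark.arrow
  else if y ∈ G.outputs ∧ G.undir (Sum.inl a) y then some Mark.tail
  else none

/-- The mark at node `y` on the new edge between the regime node `I_a = Sum.inr a`
and `y` in the soft manipulation of an iPAG-type graph `G` over `N ⊕ N`. -/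
def pagSoftTarget {N : Type} (G : MixedGraph (N ⊕ N)) (a : N) (y : N ⊕ N) : Option Mark :=
  if y = Sum.inl a then
    (if G.arrowAt (Sum.inl a) then some Mark.arrow
     else if ∃ c, G.undir (Sum.inl a) c then some Mark.tail
     else some Mark.circle)
  else if y ∈ G.outputs ∧ ((G.dir (Sum.inl a) y ∧ ¬ G.VisibleCond (Sum.inl a) y) ∨
      G.circArrow (Sum.inl a) y) then some Mark.arrow
  else if y ∈ G.outputs ∧ (G.undir (Sum.inl a) y ∨
      (G.circTail (Sum.inl a) y ∧ ∃ c, G.undir c y)) then some Mark.tail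
  else if y ∈ G.outputs ∧ (G.tailCirc (Sum.inl a) y ∨ G.circCirc (Sum.inl a) y ∨
      (G.circTail (Sum.inl a) y ∧ ¬ ∃ c, G.undir c y)) then some Mark.circle
  else none

/-- Generic soft-manipulation step on a graph over `N ⊕ N`: for each `a ∈ A` not
already an input, the regime node `I_a = Sum.inr a` is added as an input node,
with edges (and end marks) prescribed by `target`; the mark at `I_a` on each new
edge is a tail. -/
def softManipStep {N : Type}
    (target : MixedGraph (N ⊕ N) → N → (N ⊕ N) → Option Mark)
    (G : MixedGraph (N ⊕ N)) (A : Set N) : MixedGraph (N ⊕ N) where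
  inputs := G.inputs ∪ Sum.inr '' {a | a ∈ A ∧ Sum.inl a ∉ G.inputs}
  outputs := G.outputs
  mark := fun x y =>
    match x, y with
    | Sum.inr a, Sum.inr b =>
        if a ∈ A ∧ Sum.inl a ∉ G.inputs then
          (if (target G a (Sum.inr b)).isSome then some Mark.tail else none)
        else if b ∈ A ∧ Sum.inl b ∉ G.inputs then target G b (Sum.inr a)
        else G.mark x y
    | Sum.inr a, Sum.inl v =>
        if a ∈ A ∧ Sum.inl a ∉ G.inputs then
          (if (target G a (Sum.inl v)).isSome then some Mark.tail else none)
        else G.mark x y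
    | Sum.inl v, Sum.inr a =>
        if a ∈ A ∧ Sum.inl a ∉ G.inputs then target G a (Sum.inl v)
        else G.mark x y
    | Sum.inl _, Sum.inl _ => G.mark x y

/-- Soft-manipulation step for iMAG-type graphs over `N ⊕ N`. -/
def magSoftManipStep {N : Type} (G : MixedGraph (N ⊕ N)) (A : Set N) :
    MixedGraph (N ⊕ N) :=
  softManipStep magSoftTarget G A

/-- The soft-manipulated iMAG `M_{do(I_A)}`, over node type `N ⊕ N`. -/
def magSoftManip {N : Type} (M : MixedGraph N) (A : Set N) : MixedGraph (N ⊕ N) :=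
  magSoftManipStep M.sumInl A

/-- The soft-manipulated iPAG `P_{do(I_A)}`, over node type `N ⊕ N`. -/
def pagSoftManip {N : Type} (P : MixedGraph N) (A : Set N) : MixedGraph (N ⊕ N) :=
  softManipStep pagSoftTarget P.sumInl A

/-- Hard manipulation `do(T)` of an iPAG-type graph: as for iMAGs, but in addition
every remaining circle mark at a manipulated node is replaced by a tail. -/
def pagHardManip {N : Type} (G : MixedGraph N) (T : Set N) : MixedGraph N where
  inputs := G.inputs ∪ T
  outputs := G.outputs \ T
  mark := fun x y =>
    if (x ∈ T ∧ x ∉ G.inputs ∧ G.mark x y = some Mark.arrow) ∨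
        (y ∈ T ∧ y ∉ G.inputs ∧ G.mark y x = some Mark.arrow) ∨
        ((x ∈ T ∨ x ∈ G.inputs) ∧ (y ∈ T ∨ y ∈ G.inputs)) then none
    else if x ∈ T ∧ x ∉ G.inputs ∧ y ∈ G.outputs ∧ y ∉ T ∧
        G.mark x y = some Mark.circle then some Mark.tail
    else G.mark x y

/-- Orient all circle marks of `G` as tails. -/
def orientCirclesTails {N : Type} (G : MixedGraph N) : MixedGraph N :=
  { G with
    mark := fun x y =>
      (G.mark x y).map (fun m => if m = Mark.circle then Mark.tail else m) }

/-- There is a pc-connecting path from `a` to `b` in `G`: a single edge between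
`a` and `b` that is not a visible directed edge, or a path
`a *→ v₁ ↔ ⋯ ↔ v_{n−1} ←* b` (`n > 1`) none of whose edges is visible directed. -/
def PcConn {N : Type} (G : MixedGraph N) (a b : N) : Prop :=
  (G.adj a b ∧ ¬ G.VisibleDir a b ∧ ¬ G.VisibleDir b a) ∨
  (∃ w : GWalk G, w.IsPath ∧ 1 < w.len ∧ w.first = a ∧ w.last = b ∧
    G.mark (w.f 1) (w.f 0) = some Mark.arrow ∧
    G.mark (w.f (w.len - 1)) (w.f w.len) = some Mark.arrow ∧
    (∀ i, 1 ≤ i → i < w.len - 1 → G.bidir (w.f i) (w.f (i + 1))) ∧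
    (∀ i < w.len, ¬ G.VisibleDir (w.f i) (w.f (i + 1)) ∧
      ¬ G.VisibleDir (w.f (i + 1)) (w.f i)))

/-- The pc-component of `b` in `G`. -/
def pcSet {N : Type} (G : MixedGraph N) (b : N) : Set N := {a | PcConn G a b}

/-- The region of a set `B` in `G`: all nodes in the bucket of some node
pc-connected to a node of `B`. -/
def regionSet {N : Type} (G : MixedGraph N) (B : Set N) : Set N :=
  {a | ∃ b ∈ B, ∃ c, PcConn G c b ∧ G.SameBucket a c}

/-- `S` is a bucket of `G`. -/
def IsBucket {N : Type} (G : MixedGraph N) (S : Set N) : Prop :=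
  ∃ a ∈ G.nodes, S = {x | G.SameBucket x a}

/-- FCI rule R1 (closure form): if `k *→ j` with the edge between `j` and `i`
carrying a circle at `j`, `i` and `k` non-adjacent and `i` not an input node,
then that edge is `j → i`. -/
def FciR1 {N : Type} (P : MixedGraph N) : Prop :=
  ∀ i j k, P.mark j k = some Mark.arrow → ¬ P.adj i k → i ∉ P.inputs →
    P.mark j i = some Mark.circle → P.dir j i

/-- FCI rule R2 (closure form): if `i → j *→ k` or `i *→ j → k` with the edge
between `i` and `k` carrying a circle at `k`, then that edge has an arrowhead at `k`. -/
def FciR2 {N : Type} (P : MixedGraph N) : Prop :=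
  ∀ i j k, ((P.dir i j ∧ P.mark k j = some Mark.arrow) ∨
      (P.mark j i = some Mark.arrow ∧ P.dir j k)) →
    P.mark k i = some Mark.circle → P.mark k i = some Mark.arrow

/-- FCI rule R4 (closure form): for every discriminating path `⟨a,…,y,z⟩` for `y`,
the mark at `y` on the edge between `y` and `z` is not a circle. -/
def FciR4 {N : Type} (P : MixedGraph N) : Prop :=
  ∀ w : GWalk P, w.IsPath → 3 ≤ w.len → ¬ P.adj (w.f 0) (w.f w.len) →
    (∀ i, 0 < i → i < w.len - 1 → w.ColliderAt i ∧ P.dir (w.f i) (w.f w.len)) →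
    P.mark (w.f (w.len - 1)) (w.f w.len) ≠ some Mark.circle

/-- Property (P2) of iSOPAGs: no `a *→ b` together with `b −∘ c`, and no
`a *→ b` together with `b ∘− c`. -/
def SopagP2 {N : Type} (P : MixedGraph N) : Prop :=
  ∀ a b c, P.mark b a = some Mark.arrow → ¬ P.tailCirc b c ∧ ¬ P.circTail b c

/-- Property (P3) of iSOPAGs: if `a *→ b` and the edge between `b` and `c` has a
circle at `b`, then `a *→ c`. -/
def SopagP3 {N : Type} (P : MixedGraph N) : Prop :=
  ∀ a b c, P.mark b a = some Mark.arrow → P.mark b c = some Mark.circle →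
    P.mark c a = some Mark.arrow

/-- `P` is an iSOPAG: an iPAG representing some isADMG, closed under the FCI
orientation rules (R1, R2, R4), and satisfying (P2) and (P3). -/
def IsISOPAG {N : Type} (P : MixedGraph N) : Prop :=
  P.IsIPAG ∧ (∃ A : SADMG N, A.WF ∧ RepresentsS P A) ∧
  FciR1 P ∧ FciR2 P ∧ FciR4 P ∧ SopagP2 P ∧ SopagP3 P


section Aux
open MixedGraph

namespace St4

variable {N : Type}

/-- the constructed ADMG graph -/
def selGraph (M : MixedGraph N) (D : Set (N × N)) (f : N × N → N) : MixedGraph N where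
  inputs := M.inputs
  outputs := M.outputs ∪ f '' D
  mark := fun x y =>
    if hx : ∃ p ∈ D, f p = x then
      (if y = hx.choose.1 ∨ y = hx.choose.2 then some Mark.arrow else none)
    else if hy : ∃ p ∈ D, f p = y then
      (if x = hy.choose.1 ∨ x = hy.choose.2 then some Mark.tail else none)
    else if M.undir x y then none else M.mark x y

variable {M : MixedGraph N} {D : Set (N × N)} {f : N × N → N}

/-- `x` is a selection node -/
def Sel (D : Set (N × N)) (f : N × N → N) (x : N) : Prop := ∃ p ∈ D, f p = x

theorem mark_sel_left (hInj : Set.InjOn f D) {p : N × N} (hp : p ∈ D) (y : N) :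
    (selGraph M D f).mark (f p) y =
      if y = p.1 ∨ y = p.2 then some Mark.arrow else none := by
  have hx : ∃ q ∈ D, f q = f p := ⟨p, hp, rfl⟩
  show (if hx' : ∃ q ∈ D, f q = f p then _ else _) = _
  rw [dif_pos hx]
  have : hx.choose = p := hInj hx.choose_spec.1 hp hx.choose_spec.2
  rw [this]

theorem mark_nonsel_sel (hInj : Set.InjOn f D) {x : N} (hx : ¬ Sel D f x)
    {p : N × N} (hp : p ∈ D) :
    (selGraph M D f).mark x (f p) =
      if x = p.1 ∨ x = p.2 then some Mark.tail else none := by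
  have hy : ∃ q ∈ D, f q = f p := ⟨p, hp, rfl⟩
  show (if _ : ∃ q ∈ D, f q = x then _ else _) = _
  rw [dif_neg (show ¬ ∃ q ∈ D, f q = x from hx), dif_pos hy]
  have : hy.choose = p := hInj hy.choose_spec.1 hp hy.choose_spec.2
  rw [this]

theorem mark_nonsel {x y : N} (hx : ¬ Sel D f x) (hy : ¬ Sel D f y) :
    (selGraph M D f).mark x y = if M.undir x y then none else M.mark x y := by
  show (if _ : ∃ q ∈ D, f q = x then _ else _) = _
  rw [dif_neg (show ¬ ∃ q ∈ D, f q = x from hx),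
      dif_neg (show ¬ ∃ q ∈ D, f q = y from hy)]

theorem not_sel_of_mem (hFresh : ∀ p ∈ D, f p ∉ M.nodes) {x : N}
    (hx : x ∈ M.nodes) : ¬ Sel D f x := by
  rintro ⟨p, hp, rfl⟩; exact hFresh p hp hx

theorem dir_nonsel_iff {x y : N} (hx : ¬ Sel D f x) (hy : ¬ Sel D f y) :
    (selGraph M D f).dir x y ↔ M.dir x y := by
  unfold MixedGraph.dir
  rw [mark_nonsel hx hy, mark_nonsel hy hx]
  constructor
  · rintro ⟨h1, h2⟩
    split_ifs at h1 h2 <;> simp_all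
  · rintro ⟨h1, h2⟩
    have hnu : ¬ M.undir x y := fun hu => by simp [hu.2] at h2
    have hnu' : ¬ M.undir y x := fun hu => by simp [hu.1] at h2
    rw [if_neg hnu, if_neg hnu']
    exact ⟨h1, h2⟩

theorem mark_to_M {x y : N} (hx : ¬ Sel D f x) (hy : ¬ Sel D f y) {m : Mark}
    (h : (selGraph M D f).mark x y = some m) : M.mark x y = some m := by
  rw [mark_nonsel hx hy] at h
  split_ifs at h
  exact h

theorem arrow_iff_nonsel {x y : N} (hx : ¬ Sel D f x) (hy : ¬ Sel D f y) :
    (selGraph M D f).mark x y = some Mark.arrow ↔ M.mark x y = some Mark.arrow := by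
  rw [mark_nonsel hx hy]
  constructor
  · intro h; split_ifs at h; exact h
  · intro h
    have : ¬ M.undir x y := fun hu => by simp [hu.1] at h
    rw [if_neg this]; exact h

/-- selection nodes have no tails, hence no outgoing directed edges -/
theorem sel_mark (hInj : Set.InjOn f D) {x : N} (hx : Sel D f x) (y : N) :
    (selGraph M D f).mark x y ≠ some Mark.tail := by
  obtain ⟨p, hp, rfl⟩ := hx
  rw [mark_sel_left hInj hp]
  split_ifs <;> simp

theorem not_sel_of_tail (hInj : Set.InjOn f D) {x y : N}
    (h : (selGraph M D f).mark x y = some Mark.tail) : ¬ Sel D f x :=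
  fun hx => sel_mark hInj hx y h

theorem anc_to_M (hInj : Set.InjOn f D) {x y : N}
    (h : (selGraph M D f).anc x y) : ¬ Sel D f y → M.anc x y := by
  induction h with
  | refl => exact fun _ => Relation.ReflTransGen.refl
  | tail hxb hbc ih =>
    intro hy
    have hb := not_sel_of_tail hInj hbc.1
    exact Relation.ReflTransGen.tail (ih hb) ((dir_nonsel_iff hb hy).mp hbc)
theorem anc_from_M (hFresh : ∀ p ∈ D, f p ∉ M.nodes)
    (hWF : ∀ u v : N, (M.mark u v).isSome → u ∈ M.nodes ∧ v ∈ M.nodes)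
    {x y : N} (h : M.anc x y) : (selGraph M D f).anc x y := by
  induction h with
  | refl => exact Relation.ReflTransGen.refl
  | tail hxb hbc ih =>
    rename_i b c
    have hb : b ∈ M.nodes := (hWF b c (by simp [hbc.1])).1
    have hc : c ∈ M.nodes := (hWF b c (by simp [hbc.1])).2
    exact Relation.ReflTransGen.tail ih
      ((dir_nonsel_iff (not_sel_of_mem hFresh hb) (not_sel_of_mem hFresh hc)).mpr hbc)

theorem sel_anc (hInj : Set.InjOn f D) {x y : N} (hx : Sel D f x)
    (h : (selGraph M D f).anc x y) : x = y := by
  rcases Relation.ReflTransGen.cases_head h with h | ⟨c, hxc, _⟩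
  · exact h
  · exact absurd hxc.1 (sel_mark hInj hx c)

theorem dir_into_sel (hInj : Set.InjOn f D) {c : N} {p : N × N} (hp : p ∈ D)
    (h : (selGraph M D f).dir c (f p)) : ¬ Sel D f c ∧ (c = p.1 ∨ c = p.2) := by
  have hc : ¬ Sel D f c := not_sel_of_tail hInj h.1
  refine ⟨hc, ?_⟩
  have := h.1
  rw [mark_nonsel_sel hInj hc hp] at this
  by_contra hcc
  rw [if_neg hcc] at this
  exact absurd this (by simp)

theorem anc_into_sel (hInj : Set.InjOn f D) {x : N} {p : N × N} (hp : p ∈ D)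
    (hx : ¬ Sel D f x) (h : (selGraph M D f).anc x (f p)) :
    ∃ c, (c = p.1 ∨ c = p.2) ∧ M.anc x c := by
  rcases Relation.ReflTransGen.cases_tail h with h | ⟨c, hxc, hdir⟩
  · exact absurd ⟨p, hp, h⟩ hx
  · obtain ⟨hc, hcp⟩ := dir_into_sel hInj hp hdir
    exact ⟨c, hcp, anc_to_M hInj hxc hc⟩

/-- in any graph, ancestors of a node with no arrowheads at it are trivial -/
theorem anc_of_noArrow {G : MixedGraph N} {x u : N}
    (hu : ∀ y, G.mark u y ≠ some Mark.arrow) (h : G.anc x u) : x = u := by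
  rcases Relation.ReflTransGen.cases_tail h with h | ⟨c, _, hdir⟩
  · exact h.symm
  · exact absurd hdir.2 (hu c)

/-- the one-edge walk -/
def walk1 (G : MixedGraph N) (x y : N) (h : G.adj x y) : GWalk G where
  len := 1
  f := fun i => if i = 0 then x else y
  hadj := by
    intro i hi
    have : i = 0 := Nat.lt_one_iff.mp hi
    subst this
    simpa using h

theorem walk1_path {G : MixedGraph N} {x y : N} (h : G.adj x y) (hxy : x ≠ y) :
    (walk1 G x y h).IsPath := by
  intro i hi j hj hij
  simp only [walk1] at hi hj hij
  interval_cases i <;> interval_cases j <;> simp_all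

/-- the two-edge walk -/
def walk2 (G : MixedGraph N) (x s y : N) (h1 : G.adj x s) (h2 : G.adj s y) : GWalk G where
  len := 2
  f := fun i => if i = 0 then x else if i = 1 then s else y
  hadj := by
    intro i hi
    interval_cases i <;> simpa

theorem walk2_path {G : MixedGraph N} {x s y : N} (h1 : G.adj x s) (h2 : G.adj s y)
    (hxs : x ≠ s) (hsy : s ≠ y) (hxy : x ≠ y) : (walk2 G x s y h1 h2).IsPath := by
  intro i hi j hj hij
  simp only [walk2] at hi hj hij
  interval_cases i <;> interval_cases j <;> simp_all
theorem mark_into_sel_ne_arrow (hInj : Set.InjOn f D)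
    (hFresh : ∀ p ∈ D, f p ∉ M.nodes)
    (hEnds : ∀ p ∈ D, p.1 ∈ M.nodes ∧ p.2 ∈ M.nodes)
    {p : N × N} (hp : p ∈ D) (z : N) :
    (selGraph M D f).mark z (f p) ≠ some Mark.arrow := by
  by_cases hz : Sel D f z
  · obtain ⟨q, hq, rfl⟩ := hz
    rw [mark_sel_left hInj hq]
    have h1 : f p ≠ q.1 := fun h => hFresh p hp (h ▸ (hEnds q hq).1)
    have h2 : f p ≠ q.2 := fun h => hFresh p hp (h ▸ (hEnds q hq).2)
    rw [if_neg (by tauto)]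
    simp
  · rw [mark_nonsel_sel hInj hz hp]
    split_ifs <;> simp
set_option maxHeartbeats 4000000 in
theorem exists_good {N : Type} [Infinite N] (M : MixedGraph N) (hM : M.IsIMAG)
    (a : N) (ha : a ∈ M.outputs) (hna : ¬ M.arrowAt a) :
    ∃ A : SADMG N, A.WF ∧ RepresentsS M A ∧ a ∈ A.graph.ancSet A.sel := by
  obtain ⟨⟨hWF, hc2, hc3, hc4, hc5, hc6, hc7⟩, hnc⟩ := hM
  obtain ⟨hdisj, hIfin, hOfin, hsym, hirr, hmem⟩ := hWF
  have hnodesFin : M.nodes.Finite := hIfin.union hOfin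
  set D : Set (N × N) := {p : N × N | M.undir p.1 p.2} ∪ {(a, a)} with hDdef
  have hamem : a ∈ M.nodes := Or.inr ha
  have hDa : (a, a) ∈ D := Or.inr rfl
  have hEnds : ∀ p ∈ D, p.1 ∈ M.nodes ∧ p.2 ∈ M.nodes := by
    rintro ⟨u, v⟩ (h | h)
    · have h1 := hmem u v (by simp [h.1])
      exact ⟨h1.1, h1.2⟩
    · simp only [Set.mem_singleton_iff, Prod.mk.injEq] at h
      obtain ⟨h1, h2⟩ := h
      exact ⟨by simp [h1, hamem], by simp [h2, hamem]⟩
  have hDfin : D.Finite := by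
    refine ((hnodesFin.prod hnodesFin).subset ?_)
    rintro ⟨u, v⟩ hp
    exact Set.mem_prod.mpr (hEnds _ hp)
  have hcompl : (M.nodes)ᶜ.Infinite := hnodesFin.infinite_compl
  haveI : Fintype ↥D := hDfin.fintype
  set e := hcompl.natEmbedding with he
  set q : ↥D ≃ Fin (Fintype.card ↥D) := Fintype.equivFin ↥D with hq
  set f : N × N → N := fun p => if h : p ∈ D then (e (q ⟨p, h⟩) : N) else a with hf
  have hFresh : ∀ p ∈ D, f p ∉ M.nodes := by
    intro p hp
    simp only [hf, dif_pos hp]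
    exact (e (q ⟨p, hp⟩)).2
  have hInj : Set.InjOn f D := by
    intro p hp p' hp' h
    simp only [hf, dif_pos hp, dif_pos hp'] at h
    have h1 : e (q ⟨p, hp⟩) = e (q ⟨p', hp'⟩) := Subtype.coe_injective h
    have h2 : (q ⟨p, hp⟩ : ℕ) = (q ⟨p', hp'⟩ : ℕ) := e.injective h1
    have h3 : q ⟨p, hp⟩ = q ⟨p', hp'⟩ := Fin.val_injective h2
    have h4 : (⟨p, hp⟩ : ↥D) = ⟨p', hp'⟩ := q.injective h3
    exact congrArg Subtype.val h4
  set A : SADMG N := ⟨selGraph M D f, f '' D⟩ with hA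
  have hGr : A.graph = selGraph M D f := rfl
  have hnsel : ∀ {x : N}, x ∈ M.nodes → ¬ Sel D f x :=
    fun hx => not_sel_of_mem hFresh hx
  have hselnm : ∀ {x : N}, Sel D f x → x ∉ M.nodes := by
    rintro x ⟨p, hp, rfl⟩; exact hFresh p hp
  have markCases : ∀ {u v : N}, (M.mark u v).isSome →
      M.mark u v = some Mark.tail ∨ M.mark u v = some Mark.arrow := by
    intro u v h
    cases hm : M.mark u v with
    | none => rw [hm] at h; simp at h
    | some m =>
      cases m with
      | tail => exact Or.inl rfl
      | arrow => exact Or.inr rfl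
      | circle => exact absurd hm (hnc u v)
  have hnoArrEnd : ∀ p ∈ D, ∀ c, (c = p.1 ∨ c = p.2) →
      ∀ y, M.mark c y ≠ some Mark.arrow := by
    rintro ⟨u, v⟩ (h | h) c hc y hy
    · simp only [Set.mem_setOf_eq] at h
      rcases hc with rfl | rfl
      · exact hc6 y c v hy h
      · exact hc6 y c u hy ⟨h.2, h.1⟩
    · simp only [Set.mem_singleton_iff, Prod.mk.injEq] at h
      rcases hc with rfl | rfl
      · exact hna ⟨y, h.1 ▸ hy⟩
      · exact hna ⟨y, h.2 ▸ hy⟩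
  -- x with a directed path into a selection-node gadget has no arrowheads at x
  have hAncSel : ∀ x, ¬ Sel D f x → x ∈ A.graph.ancSet (f '' D) →
      ∀ y, M.mark x y ≠ some Mark.arrow := by
    rintro x hx ⟨s, ⟨p, hp, rfl⟩, hanc⟩
    obtain ⟨c, hc, hxc⟩ := anc_into_sel hInj hp hx hanc
    have hcno := hnoArrEnd p hp c hc
    have hxceq : x = c := anc_of_noArrow hcno hxc
    exact hxceq ▸ hcno
  -- irreflexivity
  have hAirr : ∀ x, (selGraph M D f).mark x x = none := by
    intro x
    by_cases hx : Sel D f x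
    · obtain ⟨p, hp, rfl⟩ := hx
      rw [mark_sel_left hInj hp]
      have h1 : f p ≠ p.1 := fun h => hFresh p hp (h ▸ (hEnds p hp).1)
      have h2 : f p ≠ p.2 := fun h => hFresh p hp (h ▸ (hEnds p hp).2)
      rw [if_neg (by tauto)]
    · rw [mark_nonsel hx hx]
      split_ifs with h
      · rfl
      · exact hirr x
  have hAsym : ∀ x y : N, ((selGraph M D f).mark x y).isSome →
      ((selGraph M D f).mark y x).isSome := by
    intro x y hxy
    by_cases hx : Sel D f x
    · obtain ⟨p, hp, rfl⟩ := hx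
      rw [mark_sel_left hInj hp] at hxy
      by_cases hcond : y = p.1 ∨ y = p.2
      · have hyn : y ∈ M.nodes := by
          rcases hcond with rfl | rfl
          exacts [(hEnds p hp).1, (hEnds p hp).2]
        rw [mark_nonsel_sel hInj (hnsel hyn) hp, if_pos hcond]
        simp
      · rw [if_neg hcond] at hxy; simp at hxy
    · by_cases hy : Sel D f y
      · obtain ⟨p, hp, rfl⟩ := hy
        rw [mark_nonsel_sel hInj hx hp] at hxy
        by_cases hcond : x = p.1 ∨ x = p.2
        · rw [mark_sel_left hInj hp, if_pos hcond]; simp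
        · rw [if_neg hcond] at hxy; simp at hxy
      · rw [mark_nonsel hx hy] at hxy
        rw [mark_nonsel hy hx]
        split_ifs at hxy with h1
        · simp at hxy
        · have h2 : ¬ M.undir y x := fun hu => h1 ⟨hu.2, hu.1⟩
          rw [if_neg h2]
          exact hsym x y hxy
  have hMsub : ∀ {z : N}, z ∈ M.nodes → z ∈ (selGraph M D f).nodes := by
    rintro z (hz | hz)
    · exact Or.inl hz
    · exact Or.inr (Or.inl hz)
  have hSsub : ∀ {z : N}, Sel D f z → z ∈ (selGraph M D f).nodes := by
    rintro z ⟨p, hp, rfl⟩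
    exact Or.inr (Or.inr ⟨p, hp, rfl⟩)
  have hAmem : ∀ x y : N, ((selGraph M D f).mark x y).isSome →
      x ∈ (selGraph M D f).nodes ∧ y ∈ (selGraph M D f).nodes := by
    intro x y hxy
    by_cases hx : Sel D f x
    · obtain ⟨p, hp, rfl⟩ := hx
      rw [mark_sel_left hInj hp] at hxy
      by_cases hcond : y = p.1 ∨ y = p.2
      · have hyn : y ∈ M.nodes := by
          rcases hcond with rfl | rfl
          exacts [(hEnds p hp).1, (hEnds p hp).2]
        exact ⟨hSsub ⟨p, hp, rfl⟩, hMsub hyn⟩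
      · rw [if_neg hcond] at hxy; simp at hxy
    · by_cases hy : Sel D f y
      · obtain ⟨p, hp, rfl⟩ := hy
        rw [mark_nonsel_sel hInj hx hp] at hxy
        by_cases hcond : x = p.1 ∨ x = p.2
        · have hxn : x ∈ M.nodes := by
            rcases hcond with rfl | rfl
            exacts [(hEnds p hp).1, (hEnds p hp).2]
          exact ⟨hMsub hxn, hSsub ⟨p, hp, rfl⟩⟩
        · rw [if_neg hcond] at hxy; simp at hxy
      · rw [mark_nonsel hx hy] at hxy
        split_ifs at hxy with h1
        · simp at hxy
        · have := hmem x y hxy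
          exact ⟨hMsub this.1, hMsub this.2⟩
  have hAclass : ∀ x y, (selGraph M D f).adj x y →
      (selGraph M D f).dir x y ∨ (selGraph M D f).dir y x ∨
      (selGraph M D f).bidir x y := by
    intro x y hxy
    unfold MixedGraph.adj at hxy
    by_cases hx : Sel D f x
    · obtain ⟨p, hp, rfl⟩ := hx
      rw [mark_sel_left hInj hp] at hxy
      by_cases hcond : y = p.1 ∨ y = p.2
      swap
      · rw [if_neg hcond] at hxy; simp at hxy
      have hyn : y ∈ M.nodes := by
        rcases hcond with rfl | rfl
        exacts [(hEnds p hp).1, (hEnds p hp).2]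
      refine Or.inr (Or.inl ⟨?_, ?_⟩)
      · rw [mark_nonsel_sel hInj (hnsel hyn) hp, if_pos hcond]
      · rw [mark_sel_left hInj hp, if_pos hcond]
    · by_cases hy : Sel D f y
      · obtain ⟨p, hp, rfl⟩ := hy
        rw [mark_nonsel_sel hInj hx hp] at hxy
        by_cases hcond : x = p.1 ∨ x = p.2
        swap
        · rw [if_neg hcond] at hxy; simp at hxy
        refine Or.inl ⟨?_, ?_⟩
        · rw [mark_nonsel_sel hInj hx hp, if_pos hcond]
        · rw [mark_sel_left hInj hp, if_pos hcond]
      · rw [mark_nonsel hx hy] at hxy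
        split_ifs at hxy with h1
        · simp at hxy
        · have hyx : (M.mark y x).isSome := hsym x y hxy
          rcases markCases hxy with h2 | h2 <;> rcases markCases hyx with h3 | h3
          · exact absurd ⟨h2, h3⟩ h1
          · exact Or.inl ((dir_nonsel_iff hx hy).mpr ⟨h2, h3⟩)
          · exact Or.inr (Or.inl ((dir_nonsel_iff hy hx).mpr ⟨h3, h2⟩))
          · exact Or.inr (Or.inr ⟨(arrow_iff_nonsel hx hy).mpr h2,
              (arrow_iff_nonsel hy hx).mpr h3⟩)
  have hAacyc : ∀ x y, (selGraph M D f).dir x y → ¬ (selGraph M D f).anc y x := by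
    intro x y hd hanc
    have hx : ¬ Sel D f x := not_sel_of_tail hInj hd.1
    by_cases hy : Sel D f y
    · have hyx : y = x := sel_anc hInj hy hanc
      have := hd.1
      rw [hyx, hAirr x] at this
      exact absurd this (by simp)
    · exact hc4 x y ((dir_nonsel_iff hx hy).mp hd) (anc_to_M hInj hanc hx)
  have hAinput : ∀ x ∈ M.inputs, ∀ y, (selGraph M D f).mark x y ≠ some Mark.arrow := by
    intro x hx y h
    have hxn : ¬ Sel D f x := hnsel (Or.inl hx)
    by_cases hy : Sel D f y
    · obtain ⟨p, hp, rfl⟩ := hy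
      rw [mark_nonsel_sel hInj hxn hp] at h
      split_ifs at h <;> simp at h
    · rw [mark_nonsel hxn hy] at h
      split_ifs at h
      exact hc2 x hx y h
  have hAii : ∀ x ∈ M.inputs, ∀ y ∈ M.inputs, ¬ (selGraph M D f).adj x y := by
    intro x hx y hy hadj
    have h1 : ¬ Sel D f x := hnsel (Or.inl hx)
    have h2 : ¬ Sel D f y := hnsel (Or.inl hy)
    unfold MixedGraph.adj at hadj
    rw [mark_nonsel h1 h2] at hadj
    split_ifs at hadj with h3
    · simp at hadj
    · exact hc3 x hx y hy hadj
  have hAdisj : Disjoint (selGraph M D f).inputs (selGraph M D f).outputs := by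
    refine Set.disjoint_union_right.mpr ⟨hdisj, ?_⟩
    rw [Set.disjoint_left]
    rintro x hx ⟨p, hp, rfl⟩
    exact hFresh p hp (Or.inl hx)
  have hObs : A.obs = M.outputs := by
    show ((M.outputs ∪ f '' D) \ (f '' D) : Set N) = M.outputs
    ext x
    simp only [Set.mem_diff, Set.mem_union]
    constructor
    · rintro ⟨h1 | h1, h2⟩
      · exact h1
      · exact absurd h1 h2
    · intro hx
      exact ⟨Or.inl hx, fun hxim => hselnm hxim (Or.inr hx)⟩
  have hrep4 : ∀ x y, M.mark x y = some Mark.arrow →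
      x ∉ (selGraph M D f).ancSet ({y} ∪ f '' D) := by
    rintro x y hmark ⟨s, hs, hanc⟩
    have hxn : x ∈ M.nodes := (hmem x y (by simp [hmark])).1
    have hyn : y ∈ M.nodes := (hmem x y (by simp [hmark])).2
    rcases hs with hs | hs
    · rw [Set.mem_singleton_iff] at hs
      subst hs
      have hMa : M.anc x s := anc_to_M hInj hanc (hnsel hyn)
      rcases markCases (hsym x s (by simp [hmark])) with h2 | h2
      · exact hc4 s x ⟨h2, hmark⟩ hMa
      · exact hc5 x s hMa ⟨h2, hmark⟩
    · exact hAncSel x (hnsel hxn) ⟨s, hs, hanc⟩ y hmark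
  have hrep5 : ∀ x y, M.mark x y = some Mark.tail →
      x ∈ (selGraph M D f).ancSet ({y} ∪ f '' D) := by
    intro x y hmark
    have hxn : x ∈ M.nodes := (hmem x y (by simp [hmark])).1
    have hyn : y ∈ M.nodes := (hmem x y (by simp [hmark])).2
    rcases markCases (hsym x y (by simp [hmark])) with h2 | h2
    · have hp : (x, y) ∈ D := Or.inl ⟨hmark, h2⟩
      refine ⟨f (x, y), Or.inr ⟨(x, y), hp, rfl⟩,
        Relation.ReflTransGen.single ⟨?_, ?_⟩⟩
      · rw [mark_nonsel_sel hInj (hnsel hxn) hp]; simp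
      · rw [mark_sel_left hInj hp]; simp
    · exact ⟨y, Or.inl rfl, Relation.ReflTransGen.single
        ((dir_nonsel_iff (hnsel hxn) (hnsel hyn)).mpr ⟨hmark, h2⟩)⟩
  have hamem2 : a ∈ (selGraph M D f).ancSet (f '' D) := by
    refine ⟨f (a, a), ⟨(a, a), hDa, rfl⟩, Relation.ReflTransGen.single ⟨?_, ?_⟩⟩
    · rw [mark_nonsel_sel hInj (hnsel hamem) hDa]; simp
    · rw [mark_sel_left hInj hDa]; simp
  have hrep3fwd : ∀ x y : N, x ≠ y → M.adj x y →
      (selGraph M D f).InducingPathBtw ∅ (f '' D) x y := by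
    intro x y hxy hadj
    have hxn : x ∈ M.nodes := (hmem x y hadj).1
    have hyn : y ∈ M.nodes := (hmem x y hadj).2
    by_cases hu : M.undir x y
    · have hp : (x, y) ∈ D := Or.inl hu
      have hm1 : (selGraph M D f).mark x (f (x, y)) = some Mark.tail := by
        rw [mark_nonsel_sel hInj (hnsel hxn) hp]; simp
      have hm2 : (selGraph M D f).mark (f (x, y)) x = some Mark.arrow := by
        rw [mark_sel_left hInj hp]; simp
      have hm3 : (selGraph M D f).mark (f (x, y)) y = some Mark.arrow := by
        rw [mark_sel_left hInj hp]; simp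
      have ha1 : (selGraph M D f).adj x (f (x, y)) := by
        unfold MixedGraph.adj; rw [hm1]; rfl
      have ha2 : (selGraph M D f).adj (f (x, y)) y := by
        unfold MixedGraph.adj; rw [hm3]; rfl
      have hxs : x ≠ f (x, y) := fun h => hFresh (x, y) hp (h ▸ hxn)
      have hsy : f (x, y) ≠ y := fun h => hFresh (x, y) hp (h.symm ▸ hyn)
      refine ⟨walk2 _ x (f (x, y)) y ha1 ha2, walk2_path ha1 ha2 hxs hsy hxy,
        by simp [walk2, GWalk.first], by simp [walk2, GWalk.last], ?_, ?_⟩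
      · intro i h0 hl
        have hi1 : i = 1 := by
          simp only [walk2] at hl
          omega
        subst hi1
        refine Or.inr ⟨?_, ?_⟩
        · show (selGraph M D f).mark ((walk2 _ x (f (x, y)) y ha1 ha2).f 1)
            ((walk2 _ x (f (x, y)) y ha1 ha2).f 0) = some Mark.arrow
          simpa [walk2] using hm2
        · show (selGraph M D f).mark ((walk2 _ x (f (x, y)) y ha1 ha2).f 1)
            ((walk2 _ x (f (x, y)) y ha1 ha2).f 2) = some Mark.arrow
          simpa [walk2] using hm3
      · intro i h0 hl _
        have hi1 : i = 1 := by
          simp only [walk2] at hl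
          omega
        subst hi1
        refine ⟨f (x, y), Or.inr ⟨(x, y), hp, rfl⟩, ?_⟩
        exact Relation.ReflTransGen.refl
    · have hAadj : (selGraph M D f).adj x y := by
        unfold MixedGraph.adj
        rw [mark_nonsel (hnsel hxn) (hnsel hyn), if_neg hu]
        exact hadj
      exact ⟨walk1 _ x y hAadj, walk1_path hAadj hxy, by simp [walk1, GWalk.first],
        by simp [walk1, GWalk.last],
        fun i h0 h1 => absurd h1 (by simp only [walk1] at h1 ⊢; omega),
        fun i h0 h1 _ => absurd h1 (by simp only [walk1] at h1 ⊢; omega)⟩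
  have hrep3bwd : ∀ x y : N, x ≠ y → x ∈ M.nodes → y ∈ M.nodes →
      (selGraph M D f).InducingPathBtw ∅ (f '' D) x y → M.adj x y := by
    rintro x y hxy hxn hyn ⟨w, hpath, hfirst, hlast, hind1, hind2⟩
    have hf0 : w.f 0 = x := hfirst
    have hflen : w.f w.len = y := hlast
    have hlen : 0 < w.len := by
      rcases Nat.eq_zero_or_pos w.len with h | h
      · rw [h] at hflen
        exact absurd (hf0.symm.trans hflen) hxy
      · exact h
    by_cases hselint : ∃ i, 0 < i ∧ i < w.len ∧ Sel D f (w.f i)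
    · obtain ⟨i, hi0, hilen, p, hp, hfp⟩ := hselint
      have hnoarr : ∀ z, (selGraph M D f).mark z (w.f i) ≠ some Mark.arrow := by
        rw [← hfp]
        exact mark_into_sel_ne_arrow hInj hFresh hEnds hp
      have hi1 : i = 1 := by
        by_contra hne
        have h1i : 1 < i := by omega
        have hcol := (hind1 (i-1) (by omega) (by omega)).resolve_left
          (Set.notMem_empty _)
        have h2 := hcol.2
        rw [show i - 1 + 1 = i by omega] at h2
        exact hnoarr _ h2
      subst hi1
      have hlen2 : w.len = 2 := by
        by_contra hne
        have h2 : 1 + 1 < w.len := by omega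
        have hcol := (hind1 (1+1) (by omega) h2).resolve_left (Set.notMem_empty _)
        have h3 := hcol.1
        rw [show 1 + 1 - 1 = 1 by omega] at h3
        exact hnoarr _ h3
      have hf2 : w.f 2 = y := by rw [← hlen2]; exact hflen
      have h01 : ((selGraph M D f).mark (w.f 0) (w.f 1)).isSome := w.hadj 0 (by omega)
      have h12 : ((selGraph M D f).mark (w.f 1) (w.f 2)).isSome := w.hadj 1 (by omega)
      rw [hf0, ← hfp, mark_nonsel_sel hInj (hnsel hxn) hp] at h01
      rw [← hfp, hf2, mark_sel_left hInj hp] at h12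
      have hxcond : x = p.1 ∨ x = p.2 := by
        by_contra hc
        rw [if_neg hc] at h01
        simp at h01
      have hycond : y = p.1 ∨ y = p.2 := by
        by_contra hc
        rw [if_neg hc] at h12
        simp at h12
      rcases hp with hp' | hp'
      · have hu : M.undir p.1 p.2 := hp'
        rcases hxcond with hx1 | hx1 <;> rcases hycond with hy1 | hy1
        · exact absurd (hx1.trans hy1.symm) hxy
        · unfold MixedGraph.adj; rw [hx1, hy1, hu.1]; rfl
        · unfold MixedGraph.adj; rw [hx1, hy1, hu.2]; rfl
        · exact absurd (hx1.trans hy1.symm) hxy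
      · have hpa : p = (a, a) := hp'
        rw [hpa] at hxcond hycond
        simp only [or_self] at hxcond hycond
        exact absurd (hxcond.trans hycond.symm) hxy
    · have hns : ∀ i ≤ w.len, ¬ Sel D f (w.f i) := by
        intro i hi
        by_cases h0 : i = 0
        · subst h0; rw [hf0]; exact hnsel hxn
        by_cases hl : i = w.len
        · subst hl; rw [hflen]; exact hnsel hyn
        · exact fun hs => hselint ⟨i, by omega, by omega, hs⟩
      have hMadj : ∀ i < w.len, M.adj (w.f i) (w.f (i+1)) := by
        intro i hi
        have h1 := w.hadj i hi
        unfold MixedGraph.adj at h1 ⊢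
        rw [mark_nonsel (hns i (le_of_lt hi)) (hns (i+1) hi)] at h1
        split_ifs at h1
        · exact absurd h1 (by simp)
        · exact h1
      by_contra hnadj
      refine hc7 x y hxy hxn hyn hnadj ⟨⟨w.len, w.f, hMadj⟩, hpath, hfirst, hlast, ?_, ?_⟩
      · intro i h0 hl
        have hl' : i < w.len := hl
        right
        have hcol := (hind1 i h0 hl').resolve_left (Set.notMem_empty _)
        exact ⟨mark_to_M (hns i (by omega)) (hns (i-1) (by omega)) hcol.1,
          mark_to_M (hns i (by omega)) (hns (i+1) (by omega)) hcol.2⟩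
      · intro i h0 hl hcolM
        have hl' : i < w.len := hl
        have hcolA : w.ColliderAt i := by
          exact ⟨(arrow_iff_nonsel (hns i (by omega)) (hns (i-1) (by omega))).mpr hcolM.1,
            (arrow_iff_nonsel (hns i (by omega)) (hns (i+1) (by omega))).mpr hcolM.2⟩
        obtain ⟨s, hs, hanc⟩ := hind2 i h0 hl' hcolA
        rcases (Set.mem_union _ _ _).mp hs with hs' | hs'
        · refine ⟨s, Or.inl hs', anc_to_M hInj hanc ?_⟩
          rcases (Set.mem_insert_iff.mp hs') with h | h
          · rw [h, show w.first = w.f 0 from rfl]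
            exact hns 0 (by omega)
          · rw [Set.mem_singleton_iff.mp h, show w.last = w.f w.len from rfl]
            exact hns w.len le_rfl
        · exact absurd hcolM.1
            (hAncSel (w.f i) (hns i (by omega)) ⟨s, hs', hanc⟩ _)
  refine ⟨A, ⟨⟨⟨hAdisj, hIfin, hOfin.union (hDfin.image f), hAsym, hAirr, hAmem⟩,
      hAclass, hAacyc, hAinput, hAii⟩, Set.subset_union_right⟩,
    ⟨rfl, hObs.symm, ?_, hrep4, hrep5⟩, hamem2⟩
  intro x y hxy hxn hyn
  constructor
  · intro hadj
    exact ⟨fun h => hc3 x h.1 y h.2 hadj, hrep3fwd x y hxy hadj⟩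
  · rintro ⟨-, hip⟩
    exact hrep3bwd x y hxy hxn hyn hip

end St4
end Aux

/-- Let `M` be an iMAG and `a` an output node.  Some edge of `M`
carries an arrowhead at `a` if and only if `a ∉ Anc_A(S_A)` for every isADMG `A`
represented by `M`. -/
theorem statement4 {N : Type} [Infinite N] (M : MixedGraph N) (hM : M.IsIMAG)
    (a : N) (ha : a ∈ M.outputs) :
    M.arrowAt a ↔
      ∀ A : SADMG N, A.WF → RepresentsS M A → a ∉ A.graph.ancSet A.sel := by
  constructor
  · rintro ⟨b, hb⟩ A hAWF hrep ⟨s, hs, hanc⟩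
    exact hrep.2.2.2.1 a b hb ⟨s, Or.inr hs, hanc⟩
  · intro h
    by_contra hna
    obtain ⟨A, hWFA, hrepA, hmemA⟩ := St4.exists_good M hM a ha hna
    exact h A hWFA hrepA hmemA

end
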